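/- Let r₁, r₂ > 0 and ω₁ > 0, ω₂ ∈ ℝ with ω₂ ≠ 0 and ω₂ ≠ ω₁, and suppose |ω₂| r₂ > ω₁ r₁ (the prolate case, arm ratio ρ = |ω₂/ω₁|·(r₂/r₁) > 1). Let (x(t), y(t)) = (r₁ cos(ω₁ t) + r₂ cos(ω₂ t), r₁ sin(ω₁ t) + r₂ sin(ω₂ t)) and T = 2π/|ω₂ − ω₁|. Then the turning number of a periodic arc is κ̆ = (1/(2π)) ∫₀ᵀ (ẋ(τ)ÿ(τ) − ẏ(τ)ẍ(τ)) / (ẋ(τ)² + ẏ(τ)²) dτ = ω₂/|ω₂ − ω₁|. (Equivalently, with χ = ω₁/ω₂: κ̆ = 1/(χ−1) for prolate hypotrochoids (χ<0) and peritrochoids (χ>1), and κ̆ = 1/(1−χ) for prolate epitrochoids (0<χ<1).) -/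

import Mathlib

open Real

private lemma hdcos' (c t : ℝ) : HasDerivAt (fun s : ℝ => Real.cos (c*s)) (-(c * Real.sin (c*t))) t := by
  have h := (Real.hasDerivAt_cos (c*t)).comp t ((hasDerivAt_id t).const_mul c)
  simpa [mul_comm, Function.comp_def] using h

private lemma hdsin' (c t : ℝ) : HasDerivAt (fun s : ℝ => Real.sin (c*s)) (c * Real.cos (c*t)) t := by
  have h := (Real.hasDerivAt_sin (c*t)).comp t ((hasDerivAt_id t).const_mul c)
  simpa [mul_comm, Function.comp_def] using h

private lemma arctan_deriv_eq (a b Δ s c : ℝ) (p : s^2 + c^2 = 1) (hD : b + a*c ≠ 0)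
    (hK : 0 < a^2 + b^2 + 2*a*b*c) :
    1 / (1 + (a*s/(b+a*c))^2) * ((a*(Δ*c)*(b+a*c) - a*s*(a*(-(Δ*s))))/(b+a*c)^2)
      = a*Δ*(a+b*c) / (a^2+b^2+2*a*b*c) := by
  have hK' : a^2 + b^2 + 2*a*b*c ≠ 0 := ne_of_gt hK
  have hsum : (b+a*c)^2 + (a*s)^2 = a^2+b^2+2*a*b*c := by linear_combination a^2 * p
  have h1 : 1 + (a*s/(b+a*c))^2 = (a^2+b^2+2*a*b*c)/(b+a*c)^2 := by
    rw [← hsum]; field_simp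
  have hnum : a*(Δ*c)*(b+a*c) - a*s*(a*(-(Δ*s))) = a*Δ*(a+b*c) := by
    linear_combination a^2*Δ*p
  rw [hnum, h1, one_div_div]
  field_simp

theorem prolate_trochoid_turning_number
    (r₁ r₂ ω₁ ω₂ : ℝ) (hr₁ : 0 < r₁) (hr₂ : 0 < r₂)
    (hω₁ : 0 < ω₁) (hω₂ : ω₂ ≠ 0) (hne : ω₂ ≠ ω₁)
    (hprol : ω₁ * r₁ < |ω₂| * r₂)
    (x y : ℝ → ℝ)
    (hx : ∀ t : ℝ, x t = r₁ * Real.cos (ω₁ * t) + r₂ * Real.cos (ω₂ * t))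
    (hy : ∀ t : ℝ, y t = r₁ * Real.sin (ω₁ * t) + r₂ * Real.sin (ω₂ * t))
    (T : ℝ) (hT : T = 2 * Real.pi / |ω₂ - ω₁|) :
    (1 / (2 * Real.pi)) *
        ∫ τ in (0:ℝ)..T,
          (deriv x τ * deriv (deriv y) τ - deriv y τ * deriv (deriv x) τ)
            / ((deriv x τ) ^ 2 + (deriv y τ) ^ 2)
      = ω₂ / |ω₂ - ω₁| := by
  obtain ⟨a, ha_def⟩ : ∃ a : ℝ, a = r₁ * ω₁ := ⟨_, rfl⟩
  obtain ⟨b, hb_def⟩ : ∃ b : ℝ, b = r₂ * ω₂ := ⟨_, rfl⟩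
  obtain ⟨Δ, hΔ_def⟩ : ∃ d : ℝ, d = ω₂ - ω₁ := ⟨_, rfl⟩
  have ha : 0 < a := ha_def ▸ mul_pos hr₁ hω₁
  have hab : a < |b| := by
    have hb : |b| = |ω₂| * r₂ := by rw [hb_def, abs_mul, abs_of_pos hr₂]; ring
    rw [hb, ha_def]; linarith [hprol]
  have hΔ : Δ ≠ 0 := by rw [hΔ_def]; exact sub_ne_zero.mpr hne
  -- derivatives
  have hxf : x = fun t => r₁ * Real.cos (ω₁ * t) + r₂ * Real.cos (ω₂ * t) := funext hx
  have hyf : y = fun t => r₁ * Real.sin (ω₁ * t) + r₂ * Real.sin (ω₂ * t) := funext hy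
  have hdx : ∀ t, HasDerivAt x (-(a * Real.sin (ω₁*t)) - b * Real.sin (ω₂*t)) t := by
    intro t
    rw [hxf]
    have h := ((hdcos' ω₁ t).const_mul r₁).add ((hdcos' ω₂ t).const_mul r₂)
    convert h using 1
    · rfl
    · rfl
    · rfl
    rw [ha_def, hb_def]; ring
  have hdy : ∀ t, HasDerivAt y (a * Real.cos (ω₁*t) + b * Real.cos (ω₂*t)) t := by
    intro t
    rw [hyf]
    have h := ((hdsin' ω₁ t).const_mul r₁).add ((hdsin' ω₂ t).const_mul r₂)
    convert h using 1
    · rfl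
    · rfl
    · rfl
    rw [ha_def, hb_def]; ring
  have hdxf : deriv x = fun t => -(a * Real.sin (ω₁*t)) - b * Real.sin (ω₂*t) :=
    funext fun t => (hdx t).deriv
  have hdyf : deriv y = fun t => a * Real.cos (ω₁*t) + b * Real.cos (ω₂*t) :=
    funext fun t => (hdy t).deriv
  have hddx : deriv (deriv x) = fun t => -(a * (ω₁ * Real.cos (ω₁*t))) - b * (ω₂ * Real.cos (ω₂*t)) := by
    funext t
    rw [hdxf]
    exact ((((hdsin' ω₁ t).const_mul a).neg).sub ((hdsin' ω₂ t).const_mul b)).deriv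
  have hddy : deriv (deriv y) = fun t => a * (-(ω₁ * Real.sin (ω₁*t))) + b * (-(ω₂ * Real.sin (ω₂*t))) := by
    funext t
    rw [hdyf]
    exact (((hdcos' ω₁ t).const_mul a).add ((hdcos' ω₂ t).const_mul b)).deriv
  -- denominator positivity
  have hden : ∀ θ : ℝ, 0 < a^2 + b^2 + 2*a*b*Real.cos θ := by
    intro θ
    have h1 : |Real.cos θ| ≤ 1 := Real.abs_cos_le_one θ
    have h2 : |2*a*b*Real.cos θ| = 2*a*(|b| * |Real.cos θ|) := by
      rw [abs_mul, abs_mul, abs_mul, abs_of_pos ha]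
      norm_num
      ring
    have h3 : -(2*a*|b|) ≤ 2*a*b*Real.cos θ := by
      have := neg_abs_le (2*a*b*Real.cos θ)
      nlinarith [mul_nonneg (mul_nonneg ha.le (abs_nonneg b)) (sub_nonneg.mpr h1)]
    nlinarith [sq_abs b, h3]
  have hbac : ∀ θ : ℝ, b + a * Real.cos θ ≠ 0 := by
    intro θ h
    have h1 : |Real.cos θ| ≤ 1 := Real.abs_cos_le_one θ
    have hb' : |b| = a * |Real.cos θ| := by
      have hb2 : b = -(a * Real.cos θ) := by linarith
      rw [hb2, abs_neg, abs_mul, abs_of_pos ha]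
    nlinarith
  -- explicit integrand
  obtain ⟨g, hg_def⟩ : ∃ g : ℝ → ℝ, g = fun τ =>
      (a^2*ω₁ + b^2*ω₂ + a*b*(ω₁+ω₂) * Real.cos (Δ*τ)) /
        (a^2 + b^2 + 2*a*b*Real.cos (Δ*τ)) := ⟨_, rfl⟩
  have hinteq : ∀ τ : ℝ,
      (deriv x τ * deriv (deriv y) τ - deriv y τ * deriv (deriv x) τ)
        / ((deriv x τ) ^ 2 + (deriv y τ) ^ 2) = g τ := by
    intro τ
    rw [hddx, hddy, hdxf, hdyf, hg_def]
    simp only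
    have hc : Real.cos (Δ*τ) = Real.cos (ω₂*τ) * Real.cos (ω₁*τ) + Real.sin (ω₂*τ) * Real.sin (ω₁*τ) := by
      rw [hΔ_def, sub_mul]; exact Real.cos_sub _ _
    have p1 : Real.sin (ω₁*τ)^2 + Real.cos (ω₁*τ)^2 = 1 := Real.sin_sq_add_cos_sq _
    have p2 : Real.sin (ω₂*τ)^2 + Real.cos (ω₂*τ)^2 = 1 := Real.sin_sq_add_cos_sq _
    rw [hc]
    congr 1
    · linear_combination a^2*ω₁*p1 + b^2*ω₂*p2
    · linear_combination a^2*p1 + b^2*p2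
  -- antiderivative
  obtain ⟨G, hG_def⟩ : ∃ G : ℝ → ℝ, G = fun τ =>
      ω₂ * τ - Real.arctan (a * Real.sin (Δ*τ) / (b + a * Real.cos (Δ*τ))) := ⟨_, rfl⟩
  have hG : ∀ τ : ℝ, HasDerivAt G (g τ) τ := by
    intro τ
    have hN : HasDerivAt (fun s => a * Real.sin (Δ*s)) (a * (Δ * Real.cos (Δ*τ))) τ :=
      (hdsin' Δ τ).const_mul a
    have hD : HasDerivAt (fun s => b + a * Real.cos (Δ*s)) (a * (-(Δ * Real.sin (Δ*τ)))) τ := by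
      have := (hasDerivAt_const τ b).add ((hdcos' Δ τ).const_mul a)
      simpa [Pi.add_def] using this
    have harc := (hN.div hD (hbac (Δ*τ))).arctan
    have hlin : HasDerivAt (fun s : ℝ => ω₂ * s) ω₂ τ := by
      simpa using (hasDerivAt_id τ).const_mul ω₂
    rw [hG_def]
    have h := hlin.sub harc
    convert h using 1
    · rfl
    · rfl
    · rfl
    simp only [Pi.div_apply]
    rw [arctan_deriv_eq a b Δ (Real.sin (Δ*τ)) (Real.cos (Δ*τ)) (Real.sin_sq_add_cos_sq _)
        (hbac (Δ*τ)) (hden (Δ*τ))]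
    rw [hg_def]
    simp only
    have hK' : a^2 + b^2 + 2*a*b*Real.cos (Δ*τ) ≠ 0 := ne_of_gt (hden (Δ*τ))
    rw [hΔ_def]
    rw [hΔ_def] at hK'
    rw [eq_sub_iff_add_eq, ← add_div, div_eq_iff hK']
    ring
  -- integrability
  have hgc : Continuous g := by
    rw [hg_def]
    have c1 : Continuous fun τ : ℝ => Real.cos (Δ*τ) :=
      Real.continuous_cos.comp (continuous_const.mul continuous_id)
    exact Continuous.div
      ((continuous_const.add (continuous_const.mul c1)))
      ((continuous_const.add (continuous_const.mul c1)))
      (fun τ => ne_of_gt (hden (Δ*τ)))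
  have hint : (∫ τ in (0:ℝ)..T,
      (deriv x τ * deriv (deriv y) τ - deriv y τ * deriv (deriv x) τ)
        / ((deriv x τ) ^ 2 + (deriv y τ) ^ 2)) = ∫ τ in (0:ℝ)..T, g τ :=
    intervalIntegral.integral_congr (fun τ _ => hinteq τ)
  rw [hint,
    intervalIntegral.integral_eq_sub_of_hasDerivAt (fun τ _ => hG τ)
      (hgc.intervalIntegrable 0 T)]
  -- evaluate
  have hG0 : G 0 = 0 := by rw [hG_def]; simp
  have hTΔ : T = 2 * π / |Δ| := by rw [hT, hΔ_def]
  have hsinT : Real.sin (Δ * T) = 0 := by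
    rcases lt_or_gt_of_ne hΔ with h | h
    · have hDT : Δ * T = -(2*π) := by
        rw [hTΔ, abs_of_neg h, mul_div_assoc', div_neg, mul_comm Δ, mul_div_assoc, div_self hΔ, mul_one]
      rw [hDT]; simp [Real.sin_two_pi]
    · have hDT : Δ * T = 2*π := by
        rw [hTΔ, abs_of_pos h]; field_simp
      rw [hDT]; exact Real.sin_two_pi
  have hGT : G T = ω₂ * T := by
    rw [hG_def]
    simp only [hsinT]
    simp
  rw [hGT, hG0, sub_zero, hT]
  have hπ : (0:ℝ) ≠ π := ne_of_lt Real.pi_pos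
  have habs : (0:ℝ) < |ω₂ - ω₁| := abs_pos.mpr (sub_ne_zero.mpr hne)
  field_simp
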